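/- Let (S,d) be a nonempty compact geodesic metric space that is homeomorphic to the 2-sphere S². Then for every R with 0 < R < diam(S) there exists r₀ > 0 such that for all r ∈ (0,r₀) and all z ∈ S, at most one connected component of S ∖ B(z,r) has diameter at least R. -/

import Mathlib

/-- A unit-speed geodesic `η : [0,T] → X`: `dist (η s) (η t) = |s - t|` for `s, t ∈ [0,T]`. -/
def IsUnitSpeedGeodesic {X : Type*} [MetricSpace X] (η : ℝ → X) (T : ℝ) : Prop :=
  ∀ s ∈ Set.Icc (0 : ℝ) T, ∀ t ∈ Set.Icc (0 : ℝ) T, dist (η s) (η t) = |s - t|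

/-- The complement of a point in a space homeomorphic to the 2-sphere is path connected,
via stereographic projection. -/
lemma compl_singleton_pathConnected {S : Type*} [MetricSpace S]
    (hsphere : Nonempty (S ≃ₜ Metric.sphere (0 : EuclideanSpace ℝ (Fin 3)) 1)) (z : S) :
    IsPathConnected ({z}ᶜ : Set S) := by
  obtain ⟨e⟩ := hsphere
  haveI : Fact (Module.finrank ℝ (EuclideanSpace ℝ (Fin 3)) = 2 + 1) := ⟨by simp⟩
  set v : Metric.sphere (0 : EuclideanSpace ℝ (Fin 3)) 1 := e z with hv
  have h1 : IsPathConnected (Set.univ : Set (EuclideanSpace ℝ (Fin 2))) :=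
    convex_univ.isPathConnected ⟨0, trivial⟩
  have h2 : IsPathConnected
      ({v}ᶜ : Set (Metric.sphere (0 : EuclideanSpace ℝ (Fin 3)) 1)) := by
    have himg := h1.image' (f := (stereographic' 2 v).symm)
      (by rw [← stereographic'_target v]; exact (stereographic' 2 v).continuousOn_symm)
    rwa [← stereographic'_target v, (stereographic' 2 v).symm_image_target_eq_source,
      stereographic'_source] at himg
  have h3 := h2.image (f := (e.symm : _ → S)) e.symm.continuous
  have himg : (e.symm : _ → S) '' ({v}ᶜ) = ({z}ᶜ : Set S) := by
    rw [Set.image_compl_eq e.symm.bijective, Set.image_singleton, hv,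
      Homeomorph.symm_apply_apply]
  rwa [himg] at h3

/-- The image of a geodesic from `x` to `y` gives a preconnected set containing `x` and `y`,
all of whose points are within `dist x y` of `x`. -/
lemma geodesic_connected {S : Type*} [MetricSpace S]
    (hgeo : ∀ x y : S, ∃ η : ℝ → S,
      IsUnitSpeedGeodesic η (dist x y) ∧ η 0 = x ∧ η (dist x y) = y)
    (x y : S) : ∃ G : Set S, IsPreconnected G ∧ x ∈ G ∧ y ∈ G ∧
      ∀ w ∈ G, dist w x ≤ dist x y := by
  obtain ⟨η, hη, h0, hd⟩ := hgeo x y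
  refine ⟨η '' Set.Icc 0 (dist x y), ?_, ⟨0, ⟨le_refl _, dist_nonneg⟩, h0⟩,
    ⟨dist x y, ⟨dist_nonneg, le_refl _⟩, hd⟩, ?_⟩
  · apply isPreconnected_Icc.image
    apply LipschitzOnWith.continuousOn (K := 1)
    intro s hs t ht
    rw [edist_dist, edist_dist, hη s hs t ht, Real.dist_eq]
    simp
  · rintro w ⟨s, hs, rfl⟩
    have h1 := hη s hs 0 ⟨le_refl _, dist_nonneg⟩
    rw [h0] at h1
    rw [h1]
    rw [abs_of_nonneg (by linarith [hs.1])]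
    linarith [hs.1, hs.2]

/-- In a component of diameter at least `R` of the complement of a ball around `z`,
there is a point at distance at least `R/3` from `z`. -/
lemma exists_far_point {S : Type*} [MetricSpace S] {R r : ℝ} (hR : 0 < R) (z u : S)
    (hdiam : R ≤ Metric.diam (connectedComponentIn (Metric.ball z r)ᶜ u)) :
    ∃ u' ∈ connectedComponentIn (Metric.ball z r)ᶜ u, R / 3 ≤ dist u' z := by
  by_contra h
  push_neg at h
  have hle : Metric.diam (connectedComponentIn (Metric.ball z r)ᶜ u) ≤ 2 * (R / 3) := by
    apply Metric.diam_le_of_forall_dist_le (by positivity)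
    intro a ha b hb
    calc dist a b ≤ dist a z + dist z b := dist_triangle _ _ _
      _ ≤ R / 3 + R / 3 := add_le_add (h a ha).le (by rw [dist_comm]; exact (h b hb).le)
      _ = 2 * (R / 3) := by ring
  linarith

/-- In a nonempty compact geodesic metric space homeomorphic to the 2-sphere, for every
`0 < R < diam S` there exists `r₀ > 0` so that for all `r ∈ (0, r₀)` and all `z`, at most one
connected component of `S \ B(z,r)` has diameter at least `R`. -/
theorem at_most_one_big_component {S : Type*} [MetricSpace S] [Nonempty S] [CompactSpace S]
    (hgeo : ∀ x y : S, ∃ η : ℝ → S,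
      IsUnitSpeedGeodesic η (dist x y) ∧ η 0 = x ∧ η (dist x y) = y)
    (hsphere : Nonempty (S ≃ₜ Metric.sphere (0 : EuclideanSpace ℝ (Fin 3)) 1))
    (R : ℝ) (hR : 0 < R) (hRd : R < Metric.diam (Set.univ : Set S)) :
    ∃ r₀ > (0 : ℝ), ∀ r ∈ Set.Ioo (0 : ℝ) r₀, ∀ z u v : S,
      u ∈ (Metric.ball z r)ᶜ → v ∈ (Metric.ball z r)ᶜ →
      R ≤ Metric.diam (connectedComponentIn (Metric.ball z r)ᶜ u) →
      R ≤ Metric.diam (connectedComponentIn (Metric.ball z r)ᶜ v) →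
      connectedComponentIn (Metric.ball z r)ᶜ u = connectedComponentIn (Metric.ball z r)ᶜ v := by
  by_contra hcon
  push_neg at hcon
  have H : ∀ n : ℕ, ∃ r ∈ Set.Ioo (0 : ℝ) ((n : ℝ) + 1)⁻¹, ∃ z u v : S,
      u ∈ (Metric.ball z r)ᶜ ∧ v ∈ (Metric.ball z r)ᶜ ∧
      R ≤ Metric.diam (connectedComponentIn (Metric.ball z r)ᶜ u) ∧
      R ≤ Metric.diam (connectedComponentIn (Metric.ball z r)ᶜ v) ∧
      connectedComponentIn (Metric.ball z r)ᶜ u ≠ connectedComponentIn (Metric.ball z r)ᶜ v :=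
    fun n => hcon _ (by positivity)
  choose r hr z u v hu hv hdu hdv hne using H
  choose u' hu'mem hu'far using fun n => exists_far_point hR (z n) (u n) (hdu n)
  choose v' hv'mem hv'far using fun n => exists_far_point hR (z n) (v n) (hdv n)
  obtain ⟨⟨zl, ul, vl⟩, -, φ, hφ, hlim⟩ :=
    isCompact_univ.tendsto_subseq (x := fun n => (z n, u' n, v' n)) (fun n => Set.mem_univ _)
  have hzl : Filter.Tendsto (fun n => z (φ n)) Filter.atTop (nhds zl) :=
    (continuous_fst.tendsto _).comp hlim
  have hul : Filter.Tendsto (fun n => u' (φ n)) Filter.atTop (nhds ul) :=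
    ((continuous_fst.comp continuous_snd).tendsto _).comp hlim
  have hvl : Filter.Tendsto (fun n => v' (φ n)) Filter.atTop (nhds vl) :=
    ((continuous_snd.comp continuous_snd).tendsto _).comp hlim
  have hdul : R / 3 ≤ dist ul zl :=
    le_of_tendsto_of_tendsto' tendsto_const_nhds (hul.dist hzl) (fun n => hu'far (φ n))
  have hdvl : R / 3 ≤ dist vl zl :=
    le_of_tendsto_of_tendsto' tendsto_const_nhds (hvl.dist hzl) (fun n => hv'far (φ n))
  have hune : ul ≠ zl := by intro h; rw [h, dist_self] at hdul; linarith
  have hvne : vl ≠ zl := by intro h; rw [h, dist_self] at hdvl; linarith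
  have hpc := compl_singleton_pathConnected hsphere zl
  obtain ⟨γ, hγ⟩ := hpc.joinedIn ul (Set.mem_compl_singleton_iff.mpr hune)
    vl (Set.mem_compl_singleton_iff.mpr hvne)
  obtain ⟨t₀, -, ht₀⟩ := isCompact_univ.exists_isMinOn (Set.univ_nonempty)
    ((continuous_const.dist γ.continuous).continuousOn
      (s := (Set.univ : Set unitInterval)))
  set δ := dist zl (γ t₀) with hδdef
  have hδ : 0 < δ := dist_pos.mpr (fun h => (hγ t₀) (Set.mem_singleton_iff.mpr h.symm))
  have hδle : ∀ t, δ ≤ dist zl (γ t) := fun t => ht₀ (Set.mem_univ t)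
  set ε := min (δ / 4) (R / 12) with hεdef
  have hε : 0 < ε := lt_min (by linarith) (by linarith)
  have hεδ : ε ≤ δ / 4 := min_le_left _ _
  have hεR : ε ≤ R / 12 := min_le_right _ _
  have hrn : ∀ᶠ n in Filter.atTop, r (φ n) < ε := by
    have h0 : Filter.Tendsto (fun n : ℕ => ((n : ℝ) + 1)⁻¹) Filter.atTop (nhds 0) := by
      simpa [one_div] using (tendsto_one_div_add_atTop_nhds_zero_nat :
        Filter.Tendsto (fun n : ℕ => 1 / ((n : ℝ) + 1)) Filter.atTop (nhds 0))
    filter_upwards [h0.eventually (gt_mem_nhds hε)] with n hn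
    calc r (φ n) < ((φ n : ℝ) + 1)⁻¹ := (hr (φ n)).2
      _ ≤ ((n : ℝ) + 1)⁻¹ := by
          have hle : (n : ℝ) ≤ (φ n : ℝ) := by exact_mod_cast hφ.le_apply
          gcongr
      _ < ε := hn
  have hz_ev : ∀ᶠ n in Filter.atTop, z (φ n) ∈ Metric.ball zl ε :=
    hzl (Metric.ball_mem_nhds _ hε)
  have hu_ev : ∀ᶠ n in Filter.atTop, u' (φ n) ∈ Metric.ball ul ε :=
    hul (Metric.ball_mem_nhds _ hε)
  have hv_ev : ∀ᶠ n in Filter.atTop, v' (φ n) ∈ Metric.ball vl ε :=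
    hvl (Metric.ball_mem_nhds _ hε)
  obtain ⟨n, ⟨hzn, hun⟩, hvn, hrnn⟩ := ((hz_ev.and hu_ev).and (hv_ev.and hrn)).exists
  set m := φ n with hm
  obtain ⟨Gu, hGu, huGu, humGu, hGud⟩ := geodesic_connected hgeo ul (u' m)
  obtain ⟨Gv, hGv, hvGv, hvmGv, hGvd⟩ := geodesic_connected hgeo vl (v' m)
  have hzm : dist (z m) zl < ε := Metric.mem_ball.mp hzn
  have hum : dist (u' m) ul < ε := Metric.mem_ball.mp hun
  have hvm : dist (v' m) vl < ε := Metric.mem_ball.mp hvn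
  have hGuF : Gu ⊆ (Metric.ball (z m) (r m))ᶜ := by
    intro w hw
    simp only [Set.mem_compl_iff, Metric.mem_ball, not_lt]
    have h1 : dist w ul ≤ dist ul (u' m) := hGud w hw
    have h2 : dist ul (u' m) < ε := by rw [dist_comm]; exact hum
    have h3 : dist ul zl ≤ dist ul w + dist w (z m) + dist (z m) zl := dist_triangle4 _ _ _ _
    have h4 : dist ul w = dist w ul := dist_comm _ _
    linarith [hrnn, hdul]
  have hGvF : Gv ⊆ (Metric.ball (z m) (r m))ᶜ := by
    intro w hw
    simp only [Set.mem_compl_iff, Metric.mem_ball, not_lt]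
    have h1 : dist w vl ≤ dist vl (v' m) := hGvd w hw
    have h2 : dist vl (v' m) < ε := by rw [dist_comm]; exact hvm
    have h3 : dist vl zl ≤ dist vl w + dist w (z m) + dist (z m) zl := dist_triangle4 _ _ _ _
    have h4 : dist vl w = dist w vl := dist_comm _ _
    linarith [hrnn, hdvl]
  have hγF : Set.range γ ⊆ (Metric.ball (z m) (r m))ᶜ := by
    rintro w ⟨t, rfl⟩
    simp only [Set.mem_compl_iff, Metric.mem_ball, not_lt]
    have h1 : δ ≤ dist zl (γ t) := hδle t
    have h2 : dist zl (γ t) ≤ dist zl (z m) + dist (z m) (γ t) := dist_triangle _ _ _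
    have h3 : dist zl (z m) = dist (z m) zl := dist_comm _ _
    have h4 : dist (z m) (γ t) = dist (γ t) (z m) := dist_comm _ _
    linarith [hrnn]
  have hγpre : IsPreconnected (Set.range γ) :=
    (isConnected_range γ.continuous).isPreconnected
  have hKpre : IsPreconnected (Gu ∪ (Set.range γ ∪ Gv)) :=
    IsPreconnected.union ul huGu (Or.inl ⟨0, γ.source⟩) hGu
      (IsPreconnected.union vl ⟨1, γ.target⟩ hvGv hγpre hGv)
  have hKF : Gu ∪ (Set.range γ ∪ Gv) ⊆ (Metric.ball (z m) (r m))ᶜ :=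
    Set.union_subset hGuF (Set.union_subset hγF hGvF)
  have hsub := hKpre.subset_connectedComponentIn (Or.inl humGu) hKF
  have hkey : connectedComponentIn (Metric.ball (z m) (r m))ᶜ (u' m) =
      connectedComponentIn (Metric.ball (z m) (r m))ᶜ (v' m) :=
    connectedComponentIn_eq (hsub (Or.inr (Or.inr hvmGv)))
  have e1 : connectedComponentIn (Metric.ball (z m) (r m))ᶜ (u m) =
      connectedComponentIn (Metric.ball (z m) (r m))ᶜ (u' m) :=
    connectedComponentIn_eq (hu'mem m)
  have e2 : connectedComponentIn (Metric.ball (z m) (r m))ᶜ (v m) =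
      connectedComponentIn (Metric.ball (z m) (r m))ᶜ (v' m) :=
    connectedComponentIn_eq (hv'mem m)
  exact hne m (e1.trans (hkey.trans e2.symm))
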